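/- If C1 is a classical cone (generated by a basis of V1) and C2 is a proper cone, then the minimal and maximal tensor products coincide: C1 ⊙ C2 = C1 ⊛ C2. -/

import Mathlib

open scoped TensorProduct
open TensorProduct

section Defs

variable {V V' V1 V2 : Type*}
  [AddCommGroup V] [Module ℝ V] [AddCommGroup V'] [Module ℝ V']
  [AddCommGroup V1] [Module ℝ V1] [AddCommGroup V2] [Module ℝ V2]

/-- The dual cone of a set `C`: linear functionals nonnegative on `C`. -/
def dualCone (C : Set V) : Set (Module.Dual ℝ V) := {f | ∀ x ∈ C, 0 ≤ f x}

/-- The functional `f ⊗ g` on `V1 ⊗ V2`. -/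
noncomputable def pairTensor (f : Module.Dual ℝ V1) (g : Module.Dual ℝ V2) :
    Module.Dual ℝ (V1 ⊗[ℝ] V2) :=
  (TensorProduct.lid ℝ ℝ).toLinearMap ∘ₗ TensorProduct.map f g

/-- The minimal tensor product of two cones: the convex hull of the product tensors. -/
def minTensor (C1 : Set V1) (C2 : Set V2) : Set (V1 ⊗[ℝ] V2) :=
  convexHull ℝ {z | ∃ x ∈ C1, ∃ y ∈ C2, z = x ⊗ₜ[ℝ] y}

/-- The maximal tensor product of two cones: tensors nonnegative on product functionals. -/
def maxTensor (C1 : Set V1) (C2 : Set V2) : Set (V1 ⊗[ℝ] V2) :=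
  {z | ∀ f ∈ dualCone C1, ∀ g ∈ dualCone C2, 0 ≤ pairTensor f g z}

/-- A cone: a set closed under multiplication by nonnegative scalars. -/
def IsConeSet (C : Set V) : Prop := ∀ x ∈ C, ∀ a : ℝ, 0 ≤ a → a • x ∈ C

/-- Topological closedness of a subset of a finite-dimensional real vector space,
expressed through (all) linear identifications with `Fin n → ℝ`. -/
def IsClosedSet (C : Set V) : Prop := ∀ (n : ℕ) (e : V ≃ₗ[ℝ] (Fin n → ℝ)), IsClosed (e '' C)

/-- A proper cone: convex, closed, salient and generating. -/
def IsProperCone (C : Set V) : Prop :=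
  Convex ℝ C ∧ IsClosedSet C ∧ IsConeSet C ∧ C ∩ (-C) = {0} ∧ Submodule.span ℝ C = ⊤

/-- A classical cone: the set of vectors with nonnegative coordinates in some basis,
i.e. the cone generated by a basis of the space. -/
def IsClassicalCone (C : Set V) : Prop :=
  ∃ (ι : Type) (b : Module.Basis ι ℝ V), C = {x | ∀ i, 0 ≤ b.repr x i}

/-- `C'` is a retract of `C` if there are positive maps `Φ, Ψ` with `Φ ∘ Ψ = id`. -/
def IsRetractOf (C' : Set V') (C : Set V) : Prop :=
  ∃ (Φ : V →ₗ[ℝ] V') (Ψ : V' →ₗ[ℝ] V),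
    (∀ x ∈ C, Φ x ∈ C') ∧ (∀ y ∈ C', Ψ y ∈ C) ∧ Φ ∘ₗ Ψ = LinearMap.id

/-- A polyhedral cone: the conical hull of finitely many vectors. -/
def IsPolyhedralCone (C : Set V) : Prop :=
  ∃ (k : ℕ) (v : Fin k → V),
    C = {x | ∃ c : Fin k → ℝ, (∀ i, 0 ≤ c i) ∧ x = ∑ i, c i • v i}

end Defs
section Aux
open Pointwise

variable {V : Type*} [AddCommGroup V] [Module ℝ V]

lemma zero_mem_of_proper {C : Set V} (h : IsProperCone C) : (0 : V) ∈ C := by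
  have h0 : (0 : V) ∈ ({0} : Set V) := rfl
  rw [← h.2.2.2.1] at h0
  exact h0.1

lemma mem_of_forall_dual [FiniteDimensional ℝ V] {C : Set V} (h : IsProperCone C)
    {y : V} (hy : ∀ g ∈ dualCone C, 0 ≤ g y) : y ∈ C := by
  by_contra hyC
  set n := Module.finrank ℝ V with hn
  let e : V ≃ₗ[ℝ] (Fin n → ℝ) := (Module.finBasis ℝ V).equivFun
  have hclosed : IsClosed (e '' C) := h.2.1 n e
  have hconv : Convex ℝ (e '' C) := h.1.linear_image e.toLinearMap
  have hnot : e y ∉ e '' C := by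
    rintro ⟨x, hx, hxy⟩
    exact hyC (by rwa [← e.injective hxy])
  obtain ⟨f, u, hfy, hfC⟩ := geometric_hahn_banach_point_closed hconv hclosed hnot
  have hu0 : u < 0 := by
    have := hfC (e 0) ⟨0, zero_mem_of_proper h, rfl⟩
    simpa using this
  have hfpos : ∀ x ∈ C, 0 ≤ f (e x) := by
    intro x hx
    by_contra hneg
    push_neg at hneg
    have ht : 0 ≤ u / f (e x) := by
      have := div_nonneg (neg_nonneg.2 hu0.le) (neg_nonneg.2 hneg.le)
      rwa [neg_div_neg_eq] at this
    have hmem : (u / f (e x)) • x ∈ C := h.2.2.1 x hx _ ht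
    have h2 := hfC (e ((u / f (e x)) • x)) ⟨_, hmem, rfl⟩
    rw [map_smul, map_smul, smul_eq_mul, div_mul_cancel₀ _ hneg.ne] at h2
    exact lt_irrefl _ h2
  have hg : (f.toLinearMap ∘ₗ (e : V →ₗ[ℝ] (Fin n → ℝ))) ∈ dualCone C := fun x hx => hfpos x hx
  have := hy _ hg
  simp only [LinearMap.comp_apply, LinearEquiv.coe_coe, ContinuousLinearMap.coe_coe] at this
  linarith

lemma add_mem_convexHull_of_cone {S : Set V}
    (hS : ∀ x ∈ S, ∀ a : ℝ, 0 ≤ a → a • x ∈ S)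
    {x y : V} (hx : x ∈ convexHull ℝ S) (hy : y ∈ convexHull ℝ S) :
    x + y ∈ convexHull ℝ S := by
  have hmid : (1/2 : ℝ) • x + (1/2 : ℝ) • y ∈ convexHull ℝ S :=
    (convex_convexHull ℝ S) hx hy (by norm_num) (by norm_num) (by norm_num)
  have h2 : (2 : ℝ) • ((1/2 : ℝ) • x + (1/2 : ℝ) • y) ∈ (2 : ℝ) • convexHull ℝ S :=
    Set.smul_mem_smul_set hmid
  rw [← convexHull_smul] at h2
  have hsub : (2 : ℝ) • S ⊆ S := by
    rintro _ ⟨z, hz, rfl⟩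
    exact hS z hz 2 (by norm_num)
  have := convexHull_mono hsub h2
  rwa [smul_add, smul_smul, smul_smul, (by norm_num : (2:ℝ) * (1/2) = 1), one_smul,
    one_smul] at this

end Aux

/-- If `C1` is a classical cone and `C2` is a proper cone, then the minimal and
maximal tensor products coincide. -/
theorem stmt0 {V1 V2 : Type*} [AddCommGroup V1] [Module ℝ V1] [FiniteDimensional ℝ V1]
    [AddCommGroup V2] [Module ℝ V2] [FiniteDimensional ℝ V2]
    (C1 : Set V1) (C2 : Set V2)
    (h1 : IsClassicalCone C1) (h2 : IsProperCone C2) :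
    minTensor C1 C2 = maxTensor C1 C2 := by
  obtain ⟨ι, b, hC1⟩ := h1
  haveI : Fintype ι := FiniteDimensional.fintypeBasisIndex b
  haveI : DecidableEq ι := Classical.decEq ι
  apply Set.eq_of_subset_of_subset
  · -- min ⊆ max
    intro z hz f hf g hg
    have hconv : Convex ℝ {w : V1 ⊗[ℝ] V2 | 0 ≤ pairTensor f g w} := by
      have : {w : V1 ⊗[ℝ] V2 | 0 ≤ pairTensor f g w}
          = (pairTensor f g) ⁻¹' (Set.Ici 0) := rfl
      rw [this]
      exact (convex_Ici (0:ℝ)).linear_preimage _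
    have hsub : {w : V1 ⊗[ℝ] V2 | ∃ x ∈ C1, ∃ y ∈ C2, w = x ⊗ₜ[ℝ] y}
        ⊆ {w | 0 ≤ pairTensor f g w} := by
      rintro w ⟨x, hx, y, hyy, rfl⟩
      have : pairTensor f g (x ⊗ₜ[ℝ] y) = f x * g y := by
        simp [pairTensor, smul_eq_mul]
      rw [Set.mem_setOf_eq, this]
      exact mul_nonneg (hf x hx) (hg y hyy)
    exact convexHull_min hsub hconv hz
  · -- max ⊆ min
    intro z hz
    -- coordinates
    set Y : ι → (V1 ⊗[ℝ] V2) →ₗ[ℝ] V2 := fun i =>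
      (TensorProduct.lid ℝ V2).toLinearMap ∘ₗ TensorProduct.map (b.coord i) LinearMap.id
      with hY
    have hdecomp : ∀ w : V1 ⊗[ℝ] V2, ∑ i, b i ⊗ₜ[ℝ] (Y i w) = w := by
      intro w
      induction w using TensorProduct.induction_on with
      | zero => simp
      | tmul x v =>
        simp only [hY, LinearMap.comp_apply, TensorProduct.map_tmul, LinearMap.id_apply,
          LinearEquiv.coe_coe, TensorProduct.lid_tmul, Module.Basis.coord_apply]
        calc ∑ i, b i ⊗ₜ[ℝ] ((b.repr x) i • v)
            = ∑ i, ((b.repr x) i • b i) ⊗ₜ[ℝ] v := by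
              simp [TensorProduct.tmul_smul, TensorProduct.smul_tmul']
          _ = (∑ i, (b.repr x) i • b i) ⊗ₜ[ℝ] v := by rw [TensorProduct.sum_tmul]
          _ = x ⊗ₜ[ℝ] v := by rw [b.sum_repr]
      | add w1 w2 ih1 ih2 =>
        simp only [map_add, TensorProduct.tmul_add, Finset.sum_add_distrib, ih1, ih2]
    have hpair : ∀ (i : ι) (g : Module.Dual ℝ V2) (w : V1 ⊗[ℝ] V2),
        pairTensor (b.coord i) g w = g (Y i w) := by
      intro i g w
      induction w using TensorProduct.induction_on with
      | zero => simp
      | tmul x v =>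
        simp [hY, pairTensor, smul_eq_mul]
      | add w1 w2 ih1 ih2 => simp [map_add, ih1, ih2]
    -- coordinate functionals are in the dual cone of C1
    have hcoord : ∀ i : ι, (b.coord i : Module.Dual ℝ V1) ∈ dualCone C1 := by
      intro i x hx
      rw [hC1] at hx
      simpa [Module.Basis.coord_apply] using hx i
    -- each Y i z ∈ C2 by the bipolar argument
    have hYC2 : ∀ i : ι, Y i z ∈ C2 := by
      intro i
      apply mem_of_forall_dual h2
      intro g hg
      rw [← hpair i g z]
      exact hz _ (hcoord i) g hg
    -- basis vectors are in C1
    have hbC1 : ∀ i : ι, b i ∈ C1 := by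
      intro i
      rw [hC1]
      intro j
      simp only [Module.Basis.repr_self]
      rw [Finsupp.single_apply]
      split <;> norm_num
    -- the generating set is a cone
    set S : Set (V1 ⊗[ℝ] V2) := {w | ∃ x ∈ C1, ∃ y ∈ C2, w = x ⊗ₜ[ℝ] y} with hSdef
    have hScone : ∀ w ∈ S, ∀ a : ℝ, 0 ≤ a → a • w ∈ S := by
      rintro w ⟨x, hx, y, hyy, rfl⟩ a ha
      refine ⟨a • x, ?_, y, hyy, by rw [TensorProduct.smul_tmul']⟩
      rw [hC1] at hx ⊢
      intro j
      rw [map_smul]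
      exact mul_nonneg ha (hx j)
    have hSz : (0 : V1 ⊗[ℝ] V2) ∈ S := by
      refine ⟨0, ?_, 0, zero_mem_of_proper h2, by simp⟩
      rw [hC1]; intro j; simp
    -- conclude: z = ∑ i, b i ⊗ Y i z ∈ convexHull S
    rw [← hdecomp z]
    have hsum : ∀ (t : Finset ι), (∑ i ∈ t, b i ⊗ₜ[ℝ] (Y i z)) ∈ convexHull ℝ S := by
      intro t
      induction t using Finset.induction_on with
      | empty => simpa using subset_convexHull ℝ S hSz
      | insert _ _ hnotmem ih =>
        rw [Finset.sum_insert hnotmem]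
        refine add_mem_convexHull_of_cone hScone ?_ ih
        exact subset_convexHull ℝ S ⟨_, hbC1 _, _, hYC2 _, rfl⟩
    exact hsum Finset.univ
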